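/- For a finite transition matrix A (n×n, no zero rows or columns), condition (I) is equivalent to condition (L): every directed cycle in the graph of A has an exit, i.e., for every cycle x_0...x_{k-1} there exist an index m and a symbol y with A(x_m, y) = 1 and y ≠ x_{m+1} (indices mod k). -/
import Mathlib


/-- `w 0, w 1, ..., w (r-1)` is an admissible word for the transition matrix `A`. -/
def AdmissibleWord {n : ℕ} (A : Fin n → Fin n → Bool) (r : ℕ) (w : ℕ → Fin n) : Prop :=
  ∀ k, k + 1 < r → A (w k) (w (k + 1)) = true

/-- A first-return word at `i`. -/
def FirstReturnWord {n : ℕ} (A : Fin n → Fin n → Bool) (i : Fin n) (r : ℕ) (w : ℕ → Fin n) : Prop :=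
  2 ≤ r ∧ AdmissibleWord A r w ∧ w 0 = i ∧ w (r - 1) = i ∧ ∀ k, 0 < k → k < r - 1 → w k ≠ i

/-- `i` lies in `𝒮`: there exist two distinct first-return words at `i`. -/
def MemS {n : ℕ} (A : Fin n → Fin n → Bool) (i : Fin n) : Prop :=
  ∃ (r s : ℕ) (w v : ℕ → Fin n), FirstReturnWord A i r w ∧ FirstReturnWord A i s v ∧
    (r ≠ s ∨ ∃ k, k < r ∧ w k ≠ v k)

/-- Condition (I). -/
def ConditionI {n : ℕ} (A : Fin n → Fin n → Bool) : Prop :=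
  ∀ i : Fin n, ∃ (r : ℕ) (w : ℕ → Fin n),
    1 ≤ r ∧ AdmissibleWord A r w ∧ w 0 = i ∧ MemS A (w (r - 1))

/-- Condition (L): every cycle has an exit. -/
def ConditionL {n : ℕ} (A : Fin n → Fin n → Bool) : Prop :=
  ∀ (k : ℕ) (c : ℕ → Fin n), 1 ≤ k → AdmissibleWord A k c → A (c (k - 1)) (c 0) = true →
    ∃ m, m < k ∧ ∃ y, A (c m) y = true ∧ y ≠ c ((m + 1) % k)

section Aux

variable {n : ℕ} (A : Fin n → Fin n → Bool)

/-- Reachability: there is an admissible word from `i` to `j` (possibly trivial). -/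
def Reach (i j : Fin n) : Prop :=
  ∃ (r : ℕ) (w : ℕ → Fin n), 1 ≤ r ∧ AdmissibleWord A r w ∧ w 0 = i ∧ w (r - 1) = j

/-- A closed walk at `v`: word of `r` letters starting at `v`, with closing edge back to `v`. -/
def CW (v : Fin n) (r : ℕ) (w : ℕ → Fin n) : Prop :=
  1 ≤ r ∧ AdmissibleWord A r w ∧ w 0 = v ∧ A (w (r - 1)) v = true

variable {A}

lemma reach_refl (i : Fin n) : Reach A i i :=
  ⟨1, fun _ => i, le_refl _, fun k hk => absurd hk (by omega), rfl, rfl⟩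

lemma reach_trans {i j l : Fin n} (h1 : Reach A i j) (h2 : Reach A j l) : Reach A i l := by
  obtain ⟨r, w, hr, hw, hw0, hwr⟩ := h1
  obtain ⟨s, u, hs, hu, hu0, hus⟩ := h2
  refine ⟨r + s - 1, fun k => if k < r then w k else u (k - r + 1), by omega, ?_, ?_, ?_⟩
  · intro k hk
    rcases Nat.lt_trichotomy (k + 1) r with h | h | h
    · simp only [if_pos (by omega : k < r), if_pos h]
      exact hw k h
    · simp only [if_pos (by omega : k < r), if_neg (by omega : ¬ k + 1 < r)]
      have e1 : k + 1 - r + 1 = 1 := by omega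
      rw [e1]
      have e2 : w k = u 0 := by
        have e3 : k = r - 1 := by omega
        rw [e3, hwr]; exact hu0.symm
      rw [e2]
      exact hu 0 (by omega)
    · simp only [if_neg (by omega : ¬ k < r), if_neg (by omega : ¬ k + 1 < r)]
      have e1 : k + 1 - r + 1 = (k - r + 1) + 1 := by omega
      rw [e1]
      exact hu (k - r + 1) (by omega)
  · simp only [if_pos (by omega : (0:ℕ) < r)]; exact hw0
  · by_cases h : s = 1
    · have e : r + s - 1 - 1 = r - 1 := by omega
      rw [e]
      simp only [if_pos (by omega : r - 1 < r)]
      rw [hwr]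
      have := hus
      rw [h] at this
      rw [← this, hu0]
    · simp only [if_neg (by omega : ¬ r + s - 1 - 1 < r)]
      have e : r + s - 1 - 1 - r + 1 = s - 1 := by omega
      rw [e, hus]

lemma cw_concat {v : Fin n} {r s : ℕ} {w u : ℕ → Fin n}
    (h1 : CW A v r w) (h2 : CW A v s u) :
    CW A v (r + s) (fun k => if k < r then w k else u (k - r)) := by
  obtain ⟨hr, hw, hw0, hwc⟩ := h1
  obtain ⟨hs, hu, hu0, huc⟩ := h2
  refine ⟨by omega, ?_, ?_, ?_⟩
  · intro k hk
    rcases Nat.lt_trichotomy (k + 1) r with h | h | h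
    · simp only [if_pos (by omega : k < r), if_pos h]
      exact hw k h
    · simp only [if_pos (by omega : k < r), if_neg (by omega : ¬ k + 1 < r)]
      have e : k + 1 - r = 0 := by omega
      rw [e, hu0]
      have e2 : k = r - 1 := by omega
      rw [e2]; exact hwc
    · simp only [if_neg (by omega : ¬ k < r), if_neg (by omega : ¬ k + 1 < r)]
      have e : k + 1 - r = (k - r) + 1 := by omega
      rw [e]
      exact hu (k - r) (by omega)
  · simp only [if_pos (by omega : (0:ℕ) < r)]; exact hw0
  · simp only [if_neg (by omega : ¬ r + s - 1 < r)]
    have e : r + s - 1 - r = s - 1 := by omega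
    rw [e]; exact huc

open Classical in
lemma exists_first_return {v : Fin n} {r : ℕ} {w : ℕ → Fin n} (h : CW A v r w) :
    ∃ T, 0 < T ∧ T ≤ r ∧ (∀ k, 0 < k → k < T → w k ≠ v) ∧ (T = r ∨ (T < r ∧ w T = v)) := by
  by_cases he : ∃ t, 0 < t ∧ t < r ∧ w t = v
  · have hspec := Nat.find_spec he
    refine ⟨Nat.find he, hspec.1, le_of_lt hspec.2.1, ?_, Or.inr ⟨hspec.2.1, hspec.2.2⟩⟩
    intro k hk1 hk2 hkv
    exact Nat.find_min he hk2 ⟨hk1, lt_trans hk2 hspec.2.1, hkv⟩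
  · exact ⟨r, h.1, le_refl _, fun k h1 h2 hv => he ⟨k, h1, h2, hv⟩, Or.inl rfl⟩

lemma frw_of_cw {v : Fin n} {r : ℕ} {w : ℕ → Fin n} {T : ℕ} (h : CW A v r w)
    (hT0 : 0 < T) (hTr : T ≤ r) (hmin : ∀ k, 0 < k → k < T → w k ≠ v)
    (hret : T = r ∨ (T < r ∧ w T = v)) :
    FirstReturnWord A v (T + 1) (fun k => if k < T then w k else v) := by
  obtain ⟨hr, hw, hw0, hwc⟩ := h
  refine ⟨by omega, ?_, ?_, ?_, ?_⟩
  · intro k hk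
    rcases Nat.lt_trichotomy (k + 1) T with hc | hc | hc
    · simp only [if_pos (by omega : k < T), if_pos hc]
      exact hw k (by omega)
    · simp only [if_pos (by omega : k < T), if_neg (by omega : ¬ k + 1 < T)]
      rcases hret with h | ⟨h1, h2⟩
      · have e : k = r - 1 := by omega
        rw [e]; exact hwc
      · have h3 := hw k (by omega)
        have e : k + 1 = T := by omega
        rw [e, h2] at h3
        exact h3
    · exact absurd hc (by omega)
  · simp only [if_pos hT0]; exact hw0
  · have e : T + 1 - 1 = T := by omega
    simp only [e, if_neg (lt_irrefl T)]
  · intro k hk1 hk2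
    have e : T + 1 - 1 = T := by omega
    rw [e] at hk2
    simp only [if_pos hk2]
    exact hmin k hk1 hk2

lemma memS_of_two_cw : ∀ r s (w u : ℕ → Fin n) (v : Fin n), CW A v r w → CW A v s u →
    (∃ j, j < r ∧ j < s ∧ w j ≠ u j) → MemS A v := by
  intro r
  induction r using Nat.strong_induction_on with
  | _ r ih =>
    rintro s w u v hw hu ⟨j, hjr, hjs, hne⟩
    obtain ⟨T, hT0, hTr, hTmin, hTret⟩ := exists_first_return hw
    obtain ⟨S, hS0, hSs, hSmin, hSret⟩ := exists_first_return hu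
    by_cases hsame : T = S ∧ ∀ k, k < T → w k = u k
    · obtain ⟨hTS, hagree⟩ := hsame
      subst hTS
      have hjT : T ≤ j := by
        by_contra hlt
        exact hne (hagree j (by omega))
      have hTr' : T < r := by omega
      have hTs' : T < s := by omega
      have hwT : w T = v := by
        rcases hTret with h | ⟨_, h⟩
        · omega
        · exact h
      have huT : u T = v := by
        rcases hSret with h | ⟨_, h⟩
        · omega
        · exact h
      have hw2 : CW A v (r - T) (fun k => w (k + T)) := by
        obtain ⟨hr1, hadm, h0, hc⟩ := hw
        refine ⟨by omega, ?_, ?_, ?_⟩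
        · intro k hk
          show A (w (k + T)) (w (k + 1 + T)) = true
          have e : k + 1 + T = (k + T) + 1 := by omega
          rw [e]
          exact hadm (k + T) (by omega)
        · show w (0 + T) = v
          rw [Nat.zero_add]; exact hwT
        · show A (w (r - T - 1 + T)) v = true
          have e : r - T - 1 + T = r - 1 := by omega
          rw [e]; exact hc
      have hu2 : CW A v (s - T) (fun k => u (k + T)) := by
        obtain ⟨hs1, hadm, h0, hc⟩ := hu
        refine ⟨by omega, ?_, ?_, ?_⟩
        · intro k hk
          show A (u (k + T)) (u (k + 1 + T)) = true
          have e : k + 1 + T = (k + T) + 1 := by omega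
          rw [e]
          exact hadm (k + T) (by omega)
        · show u (0 + T) = v
          rw [Nat.zero_add]; exact huT
        · show A (u (s - T - 1 + T)) v = true
          have e : s - T - 1 + T = s - 1 := by omega
          rw [e]; exact hc
      refine ih (r - T) (by omega) (s - T) _ _ v hw2 hu2 ⟨j - T, by omega, by omega, ?_⟩
      show w (j - T + T) ≠ u (j - T + T)
      have e : j - T + T = j := by omega
      rw [e]; exact hne
    · have hfw := frw_of_cw hw hT0 hTr hTmin hTret
      have hfu := frw_of_cw hu hS0 hSs hSmin hSret
      refine ⟨T + 1, S + 1, _, _, hfw, hfu, ?_⟩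
      by_cases hTS : T = S
      · right
        have hnall : ¬ ∀ k, k < T → w k = u k := fun hall => hsame ⟨hTS, hall⟩
        push_neg at hnall
        obtain ⟨kk, hkk, hkne⟩ := hnall
        refine ⟨kk, by omega, ?_⟩
        show (if kk < T then w kk else v) ≠ (if kk < S then u kk else v)
        rw [if_pos hkk, if_pos (show kk < S by omega)]
        exact hkne
      · left; omega

lemma exists_reach_cw (hrow : ∀ i : Fin n, ∃ j, A i j = true) (x : Fin n) :
    ∃ v r w, Reach A x v ∧ CW A v r w := by
  choose f hf using hrow
  set p : ℕ → Fin n := fun k => f^[k] x with hp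
  have hstep : ∀ k, A (p k) (p (k + 1)) = true := by
    intro k
    have e : p (k + 1) = f (p k) := Function.iterate_succ_apply' f k x
    rw [e]; exact hf (p k)
  have hab : ∃ a b : ℕ, a < b ∧ p a = p b := by
    have hcard : Fintype.card (Fin n) < Fintype.card (Fin (n + 1)) := by simp
    obtain ⟨a, b, hab, he⟩ :=
      Fintype.exists_ne_map_eq_of_card_lt (fun i : Fin (n + 1) => p i) hcard
    rcases Nat.lt_trichotomy (a : ℕ) (b : ℕ) with h | h | h
    · exact ⟨a, b, h, he⟩
    · exact absurd (Fin.ext h) hab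
    · exact ⟨b, a, h, he.symm⟩
  obtain ⟨a, b, hlt, he⟩ := hab
  refine ⟨p a, b - a, fun k => p (a + k), ?_, ?_⟩
  · refine ⟨a + 1, p, by omega, fun k hk => hstep k, ?_, ?_⟩
    · show f^[0] x = x
      rfl
    · show p (a + 1 - 1) = p a
      congr 1
  · refine ⟨by omega, ?_, ?_, ?_⟩
    · intro k hk
      show A (p (a + k)) (p (a + (k + 1))) = true
      have e : a + (k + 1) = (a + k) + 1 := by omega
      rw [e]
      exact hstep (a + k)
    · show p (a + 0) = p a
      congr 1
    · show A (p (a + (b - a - 1))) (p a) = true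
      have e : a + (b - a - 1) = b - 1 := by omega
      rw [e, he]
      have e2 : b = (b - 1) + 1 := by omega
      rw [e2]
      exact hstep (b - 1)

lemma cw_splice {v : Fin n} {r : ℕ} {w : ℕ → Fin n} (hw : CW A v r w) {m : ℕ} (hm : m < r)
    {y : Fin n} (hy : A (w m) y = true) (hre : Reach A y v) :
    ∃ q W, CW A v q W ∧ m < q ∧ ((m + 1 < q ∧ W (m + 1) = y) ∨ (m + 1 = q ∧ y = v)) := by
  obtain ⟨hr, hadm, h0, hc⟩ := hw
  obtain ⟨l, p, hl, hpadm, hp0, hpl⟩ := hre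
  refine ⟨m + l, fun k => if k ≤ m then w k else p (k - (m + 1)), ⟨by omega, ?_, ?_, ?_⟩,
    by omega, ?_⟩
  · intro k hk
    rcases Nat.lt_trichotomy k m with h | h | h
    · simp only [if_pos (by omega : k ≤ m), if_pos (by omega : k + 1 ≤ m)]
      exact hadm k (by omega)
    · subst h
      simp only [if_pos (le_refl k), if_neg (by omega : ¬ k + 1 ≤ k)]
      have e : k + 1 - (k + 1) = 0 := by omega
      rw [e, hp0]
      exact hy
    · simp only [if_neg (by omega : ¬ k ≤ m), if_neg (by omega : ¬ k + 1 ≤ m)]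
      have e : k + 1 - (m + 1) = (k - (m + 1)) + 1 := by omega
      rw [e]
      exact hpadm (k - (m + 1)) (by omega)
  · simp only [if_pos (by omega : (0:ℕ) ≤ m)]; exact h0
  · by_cases h : l = 1
    · simp only [if_pos (by omega : m + l - 1 ≤ m)]
      have e : m + l - 1 = m := by omega
      rw [e]
      have : y = v := by rw [← hp0, ← hpl, h]
      rw [← this]
      exact hy
    · simp only [if_neg (by omega : ¬ m + l - 1 ≤ m)]
      have e : m + l - 1 - (m + 1) = l - 2 := by omega
      rw [e]
      have e2 : (l - 2) + 1 = l - 1 := by omega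
      have := hpadm (l - 2) (by omega)
      rw [e2, hpl] at this
      exact this
  · by_cases h : l = 1
    · right
      constructor
      · omega
      · rw [← hp0, ← hpl, h]
    · left
      refine ⟨by omega, ?_⟩
      show (if m + 1 ≤ m then w (m + 1) else p (m + 1 - (m + 1))) = y
      rw [if_neg (by omega : ¬ m + 1 ≤ m)]
      have e : m + 1 - (m + 1) = 0 := by omega
      rw [e, hp0]

lemma reach_memS (hL : ConditionL A) (hrow : ∀ i : Fin n, ∃ j, A i j = true) :
    ∀ N (v : Fin n), {j | Reach A v j}.ncard ≤ N → (∃ r w, CW A v r w) →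
      ∃ j, Reach A v j ∧ MemS A j := by
  intro N
  induction N with
  | zero =>
    intro v hcard _
    exfalso
    have h1 : ({j | Reach A v j}).Nonempty := ⟨v, reach_refl v⟩
    have h2 : 0 < ({j | Reach A v j}).ncard := (Set.ncard_pos (Set.toFinite _)).mpr h1
    omega
  | succ N ih =>
    rintro v hcard ⟨r, w, hcw⟩
    obtain ⟨hr, hadm, h0, hclose⟩ := id hcw
    have hcyc : A (w (r - 1)) (w 0) = true := by rw [h0]; exact hclose
    obtain ⟨m, hm, y, hy, hyne⟩ := hL r w hr hadm hcyc
    by_cases hrv : Reach A y v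
    · obtain ⟨q, W, hWcw, hmq, hWm1⟩ := cw_splice hcw hm hy hrv
      have h1 := cw_concat hcw hcw
      have h2 := cw_concat hWcw hcw
      refine ⟨v, reach_refl v, memS_of_two_cw (r + r) (q + r) _ _ v h1 h2
        ⟨m + 1, by omega, by omega, ?_⟩⟩
      show (if m + 1 < r then w (m + 1) else w (m + 1 - r)) ≠
        (if m + 1 < q then W (m + 1) else w (m + 1 - q))
      have e1 : (if m + 1 < r then w (m + 1) else w (m + 1 - r)) = w ((m + 1) % r) := by
        by_cases h : m + 1 < r
        · rw [if_pos h, Nat.mod_eq_of_lt h]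
        · have e : m + 1 = r := by omega
          rw [if_neg h]
          subst e
          rw [Nat.sub_self, Nat.mod_self]
      have e2 : (if m + 1 < q then W (m + 1) else w (m + 1 - q)) = y := by
        rcases hWm1 with ⟨h1', h2'⟩ | ⟨h1', h2'⟩
        · rw [if_pos h1']; exact h2'
        · rw [if_neg (by omega : ¬ m + 1 < q), ← h1', Nat.sub_self, h0, h2']
      rw [e1, e2]
      exact Ne.symm hyne
    · have hvy : Reach A v y := by
        refine ⟨m + 2, fun k => if k ≤ m then w k else y, by omega, ?_, ?_, ?_⟩
        · intro k hk
          rcases Nat.lt_trichotomy k m with h | h | h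
          · simp only [if_pos (by omega : k ≤ m), if_pos (by omega : k + 1 ≤ m)]
            exact hadm k (by omega)
          · subst h
            simp only [if_pos (le_refl k), if_neg (by omega : ¬ k + 1 ≤ k)]
            exact hy
          · omega
        · simp only [if_pos (by omega : (0:ℕ) ≤ m)]; exact h0
        · show (if m + 2 - 1 ≤ m then w (m + 2 - 1) else y) = y
          rw [if_neg (by omega : ¬ m + 2 - 1 ≤ m)]
      have hsub : {j | Reach A y j} ⊆ {j | Reach A v j} := fun j hj => reach_trans hvy hj
      have hss : {j | Reach A y j} ⊂ {j | Reach A v j} :=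
        ⟨hsub, fun hsup => hrv (hsup (reach_refl v))⟩
      have hlt : ({j | Reach A y j}).ncard < ({j | Reach A v j}).ncard :=
        Set.ncard_lt_ncard hss (Set.toFinite _)
      obtain ⟨v', r', w', hre, hcw'⟩ := exists_reach_cw hrow y
      have hsub' : {j | Reach A v' j} ⊆ {j | Reach A y j} := fun j hj => reach_trans hre hj
      have hle : ({j | Reach A v' j}).ncard ≤ N := by
        have := Set.ncard_le_ncard hsub' (Set.toFinite _)
        omega
      obtain ⟨jj, hjr, hjm⟩ := ih v' hle ⟨r', w', hcw'⟩
      exact ⟨jj, reach_trans (reach_trans hvy hre) hjr, hjm⟩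

lemma forced_word {k : ℕ} {c : ℕ → Fin n} (hk : 1 ≤ k)
    (hstep : ∀ m, m < k → ∀ y, A (c m) y = true → y = c ((m + 1) % k))
    (r : ℕ) (w : ℕ → Fin n) (t : ℕ) (hadm : AdmissibleWord A r w)
    (h0 : w 0 = c (t % k)) : ∀ j, j < r → w j = c ((t + j) % k) := by
  intro j
  induction j with
  | zero => intro _; simpa using h0
  | succ j ihj =>
    intro hj
    have hwj := ihj (by omega)
    have hedge := hadm j (by omega)
    rw [hwj] at hedge
    have hw1 := hstep ((t + j) % k) (Nat.mod_lt _ (by omega)) (w (j + 1)) hedge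
    rw [hw1]
    congr 1
    have e : t + (j + 1) = (t + j) + 1 := by omega
    rw [e]
    have h := (Nat.mod_modEq (t + j) k).add_right 1
    exact h

lemma frw_unique {k : ℕ} {c : ℕ → Fin n} (hk : 1 ≤ k)
    (hstep : ∀ m, m < k → ∀ y, A (c m) y = true → y = c ((m + 1) % k))
    (t : ℕ) (ht : t < k) {r s : ℕ} {w u : ℕ → Fin n}
    (hw : FirstReturnWord A (c t) r w) (hu : FirstReturnWord A (c t) s u) :
    r = s ∧ ∀ j, j < r → w j = u j := by
  obtain ⟨hr2, hwadm, hw0, hwr, hwmid⟩ := hw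
  obtain ⟨hs2, huadm, hu0, hus, humid⟩ := hu
  have hfw : ∀ j, j < r → w j = c ((t + j) % k) :=
    forced_word hk hstep r w t hwadm (by rw [hw0, Nat.mod_eq_of_lt ht])
  have hfu : ∀ j, j < s → u j = c ((t + j) % k) :=
    forced_word hk hstep s u t huadm (by rw [hu0, Nat.mod_eq_of_lt ht])
  have hrs : r = s := by
    rcases Nat.lt_trichotomy r s with h | h | h
    · exfalso
      have h1 : u (r - 1) = c ((t + (r - 1)) % k) := hfu (r - 1) (by omega)
      have h2 : w (r - 1) = c ((t + (r - 1)) % k) := hfw (r - 1) (by omega)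
      have h3 : u (r - 1) = c t := by rw [h1, ← h2, hwr]
      exact humid (r - 1) (by omega) (by omega) h3
    · exact h
    · exfalso
      have h1 : w (s - 1) = c ((t + (s - 1)) % k) := hfw (s - 1) (by omega)
      have h2 : u (s - 1) = c ((t + (s - 1)) % k) := hfu (s - 1) (by omega)
      have h3 : w (s - 1) = c t := by rw [h1, ← h2, hus]
      exact hwmid (s - 1) (by omega) (by omega) h3
  refine ⟨hrs, fun j hj => ?_⟩
  rw [hfw j hj, hfu j (by omega)]

end Aux

/-- For a finite transition matrix with no zero rows or columns, condition (I) is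
equivalent to condition (L). -/
theorem conditionI_iff_conditionL
    {n : ℕ} (A : Fin n → Fin n → Bool)
    (hrow : ∀ i : Fin n, ∃ j, A i j = true)
    (hcol : ∀ j : Fin n, ∃ i, A i j = true) :
    ConditionI A ↔ ConditionL A := by
  constructor
  · intro hI k c hk hadm hclose
    by_contra hex
    push_neg at hex
    obtain ⟨r, w, hr, hwadm, hw0, hmem⟩ := hI (c 0)
    have hforced := forced_word hk hex r w 0 hwadm (by rw [hw0, Nat.zero_mod])
    have hend : w (r - 1) = c ((r - 1) % k) := by
      have := hforced (r - 1) (by omega)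
      rwa [Nat.zero_add] at this
    rw [hend] at hmem
    obtain ⟨r1, s1, w1, u1, hf1, hf2, hdis⟩ := hmem
    obtain ⟨heq, hag⟩ := frw_unique hk hex ((r - 1) % k) (Nat.mod_lt _ (by omega)) hf1 hf2
    rcases hdis with h | ⟨kk, hkk, hne⟩
    · exact h heq
    · exact hne (hag kk hkk)
  · intro hL i
    obtain ⟨v, r0, w0, hre, hcw⟩ := exists_reach_cw hrow i
    obtain ⟨j, hrj, hjm⟩ := reach_memS hL hrow ({j | Reach A v j}).ncard v (le_refl _)
      ⟨r0, w0, hcw⟩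
    obtain ⟨r, w, hr, hadm, h0, hend⟩ := reach_trans hre hrj
    exact ⟨r, w, hr, hadm, h0, by rw [hend]; exact hjm⟩
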